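/- Let φ be as above and define s(r₁) = -r₁φ'(r₁)/(φ(r₁) - r₁φ'(r₁)) and p(r₁) = 1 + r₁φ(r₁)φ''(r₁)/(φ'(r₁)(φ(r₁) - r₁φ'(r₁))) for r₁ ∈ (0, b₁). Then ds/dr₁ = s·p/r₁ on (0, b₁). -/

import Mathlib

open Set

/-- The key differential identity `ds/dr₁ = s·p/r₁` relating the parameter
`s(r₁) = -r₁φ'(r₁)/(φ(r₁) - r₁φ'(r₁))` to the osculation exponent
`p(r₁) = 1 + r₁φ(r₁)φ''(r₁)/(φ'(r₁)(φ(r₁) - r₁φ'(r₁)))`. -/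
theorem deriv_s_eq_s_mul_p_div_r
    (b₁ : ℝ) (hb₁ : 0 < b₁) (φ φ' φ'' : ℝ → ℝ)
    (hφpos : ∀ r ∈ Ico 0 b₁, 0 < φ r)
    (hφb₁ : φ b₁ = 0)
    (hderiv : ∀ r ∈ Ico 0 b₁, HasDerivAt φ (φ' r) r)
    (hφ'neg : ∀ r ∈ Ioo 0 b₁, φ' r < 0)
    (hφ'0 : φ' 0 = 0)
    (hderiv2 : ∀ r ∈ Ioo 0 b₁, HasDerivAt φ' (φ'' r) r)
    (hφ''neg : ∀ r ∈ Ioo 0 b₁, φ'' r < 0)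
    (s p : ℝ → ℝ)
    (hs : ∀ r, s r = -r * φ' r / (φ r - r * φ' r))
    (hp : ∀ r, p r = 1 + r * φ r * φ'' r / (φ' r * (φ r - r * φ' r))) :
    ∀ r ∈ Ioo 0 b₁, HasDerivAt s (s r * p r / r) r := by
  intro r hr
  obtain ⟨hr0, hrb⟩ := hr
  have hrIco : r ∈ Ico 0 b₁ := ⟨le_of_lt hr0, hrb⟩
  have hφr := hφpos r hrIco
  have hφ'r := hφ'neg r ⟨hr0, hrb⟩
  have hD : 0 < φ r - r * φ' r := by nlinarith
  have hDne : φ r - r * φ' r ≠ 0 := ne_of_gt hD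
  have hφ'ne : φ' r ≠ 0 := ne_of_lt hφ'r
  have hrne : r ≠ 0 := ne_of_gt hr0
  have hN : HasDerivAt (fun x => -x * φ' x) (-1 * φ' r + -r * φ'' r) r :=
    (hasDerivAt_id r).neg.mul (hderiv2 r ⟨hr0, hrb⟩)
  have hDd : HasDerivAt (fun x => φ x - x * φ' x)
      (φ' r - (1 * φ' r + r * φ'' r)) r :=
    (hderiv r hrIco).sub ((hasDerivAt_id r).mul (hderiv2 r ⟨hr0, hrb⟩))
  have hdiv := hN.div hDd hDne
  have hfun : s = fun x => -x * φ' x / (φ x - x * φ' x) := funext hs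
  rw [hfun]
  refine hdiv.congr_deriv ?_
  simp only [hp]
  rw [one_add_div (mul_ne_zero hφ'ne hDne), div_mul_div_comm, div_div, div_eq_div_iff (pow_ne_zero 2 hDne) (mul_ne_zero (mul_ne_zero hDne (mul_ne_zero hφ'ne hDne)) hrne)]
  ring
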